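/- The conditional von Neumann entropy S(A|B) = S(ρ_W(α)) - S(Tr_A ρ_W(α)) of the Werner state is a strictly decreasing function of α on [0,1], is positive at α = 1/√2 and negative at α = 1; hence there is a unique α₀ ∈ (1/√2, 1) where it vanishes, satisfying 3(1-α₀)log₂(1-α₀) + (1+3α₀)log₂(1+3α₀) = 4. -/

import Mathlib

open Matrix Kronecker Complex
open scoped ComplexOrder

noncomputable section

/-- Pauli matrices -/
def pauli : Fin 3 → Matrix (Fin 2) (Fin 2) ℂ
  | 0 => !![0, 1; 1, 0]
  | 1 => !![0, -Complex.I; Complex.I, 0]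
  | 2 => !![1, 0; 0, -1]

/-- The singlet Bell state |Ψ⁻⟩ = (|01⟩ - |10⟩)/√2 as a vector in ℂ²⊗ℂ². -/
def psiMinus : Fin 2 × Fin 2 → ℂ :=
  fun p => if p = (0, 1) then (1 / Real.sqrt 2 : ℝ) else
           if p = (1, 0) then (-(1 / Real.sqrt 2) : ℝ) else 0

/-- Outer product |v⟩⟨v|. -/
def outer {n : Type*} (v : n → ℂ) : Matrix n n ℂ :=
  fun i j => v i * starRingEnd ℂ (v j)

/-- The Werner state ρ_W(α) = α|Ψ⁻⟩⟨Ψ⁻| + (1-α)/4 · I₄. -/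
def wernerState (α : ℝ) : Matrix (Fin 2 × Fin 2) (Fin 2 × Fin 2) ℂ :=
  (α : ℂ) • outer psiMinus + (((1 - α) / 4 : ℝ) : ℂ) • (1 : Matrix (Fin 2 × Fin 2) (Fin 2 × Fin 2) ℂ)

/-- Partial trace over the first subsystem. -/
def ptrA {m n : Type*} [Fintype m] (ρ : Matrix (m × n) (m × n) ℂ) : Matrix n n ℂ :=
  fun i j => ∑ k, ρ (k, i) (k, j)

/-- Partial trace over the second subsystem. -/
def ptrB {m n : Type*} [Fintype n] (ρ : Matrix (m × n) (m × n) ℂ) : Matrix m m ℂ :=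
  fun i j => ∑ k, ρ (i, k) (j, k)

/-- Partial transpose on the second subsystem. -/
def ptransposeB {m n : Type*} (ρ : Matrix (m × n) (m × n) ℂ) : Matrix (m × n) (m × n) ℂ :=
  fun p q => ρ (p.1, q.2) (q.1, p.2)

/-- A density operator: positive semi-definite with unit trace. -/
def IsDensityOp {n : Type*} [Fintype n] [DecidableEq n] (ρ : Matrix n n ℂ) : Prop :=
  ρ.PosSemidef ∧ ρ.trace = 1

/-- Separability of a bipartite state: a convex combination of product density operators. -/
def IsSepState {m n : Type*} [Fintype m] [Fintype n] [DecidableEq m] [DecidableEq n]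
    (ρ : Matrix (m × n) (m × n) ℂ) : Prop :=
  ∃ (k : ℕ) (p : Fin k → ℝ) (A : Fin k → Matrix m m ℂ) (B : Fin k → Matrix n n ℂ),
    (∀ i, 0 ≤ p i) ∧ (∑ i, p i = 1) ∧
    (∀ i, IsDensityOp (A i)) ∧ (∀ i, IsDensityOp (B i)) ∧
    ρ = ∑ i, ((p i : ℂ)) • (A i ⊗ₖ B i)

/-- A Hermitian matrix has a negative eigenvalue. -/
def HasNegEigenvalue {n : Type*} [Fintype n] [DecidableEq n] (M : Matrix n n ℂ) : Prop :=
  ∃ (h : M.IsHermitian) (i : n), h.eigenvalues i < 0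

/-- Von Neumann entropy (base-2) of a matrix, via its eigenvalues (0 for non-Hermitian input). -/
def vNEntropy {n : Type*} [Fintype n] [DecidableEq n] (ρ : Matrix n n ℂ) : ℝ :=
  if h : ρ.IsHermitian then ∑ i, -(h.eigenvalues i) * Real.logb 2 (h.eigenvalues i) else 0


/-- Weyl (locally maximally mixed) two-qubit state with correlation coefficients t. -/
def weylState (t : Fin 3 → ℝ) : Matrix (Fin 2 × Fin 2) (Fin 2 × Fin 2) ℂ :=
  (1/4 : ℂ) • ((1 : Matrix (Fin 2 × Fin 2) (Fin 2 × Fin 2) ℂ) +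
    ∑ i, (t i : ℂ) • (pauli i ⊗ₖ pauli i))

/-- Matrix function via the continuous functional calculus (0 for non-Hermitian input). -/
def mfun {n : Type*} [Fintype n] [DecidableEq n] (f : ℝ → ℝ) (M : Matrix n n ℂ) :
    Matrix n n ℂ :=
  if h : M.IsHermitian then h.cfc f else 0

/-- Base-2 logarithm extended by 0 outside the support. -/
def log2supp (x : ℝ) : ℝ := if 0 < x then Real.logb 2 x else 0

/-- The Cerf–Adami conditional amplitude operator ρ_{A|B} = exp₂(log₂ ρ - log₂ (1 ⊗ ρ_B)). -/
def condAmpOp {m n : Type*} [Fintype m] [Fintype n] [DecidableEq m] [DecidableEq n]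
    (ρ : Matrix (m × n) (m × n) ℂ) : Matrix (m × n) (m × n) ℂ :=
  mfun (fun x => (2 : ℝ) ^ x)
    (mfun log2supp ρ - mfun log2supp ((1 : Matrix m m ℂ) ⊗ₖ ptrA ρ))

/-- The spin-flipped state σ_y⊗σ_y ρ* σ_y⊗σ_y. -/
def spinFlip (ρ : Matrix (Fin 2 × Fin 2) (Fin 2 × Fin 2) ℂ) :
    Matrix (Fin 2 × Fin 2) (Fin 2 × Fin 2) ℂ :=
  (pauli 1 ⊗ₖ pauli 1) * ρ.map (starRingEnd ℂ) * (pauli 1 ⊗ₖ pauli 1)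

/-- The Wootters concurrence of a two-qubit state ρ equals c: the λᵢ are the decreasingly
ordered (nonnegative) eigenvalues of ρ ρ̃ and c = max{0, √λ₁ - √λ₂ - √λ₃ - √λ₄}. -/
def ConcurrenceEq (ρ : Matrix (Fin 2 × Fin 2) (Fin 2 × Fin 2) ℂ) (c : ℝ) : Prop :=
  ∃ l : Fin 4 → ℝ, Antitone l ∧ (∀ i, 0 ≤ l i) ∧
    (ρ * spinFlip ρ).charpoly = ∏ i : Fin 4, (Polynomial.X - Polynomial.C ((l i : ℝ) : ℂ)) ∧
    c = max 0 (Real.sqrt (l 0) - Real.sqrt (l 1) - Real.sqrt (l 2) - Real.sqrt (l 3))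

/-- The state |ψ_θ⟩ = sin θ |01⟩ + cos θ |10⟩. -/
def psiTheta (θ : ℝ) : Fin 2 × Fin 2 → ℂ :=
  fun p => if p = (0, 1) then (Real.sin θ : ℝ) else
           if p = (1, 0) then (Real.cos θ : ℝ) else 0

/-- The state ρ_top = (|00⟩⟨00| + |11⟩⟨11|)/2. -/
def rhoTop : Matrix (Fin 2 × Fin 2) (Fin 2 × Fin 2) ℂ :=
  Matrix.diagonal (fun p => if p.1 = p.2 then (1/2 : ℂ) else 0)

/-- The Gisin state ρ_G(λ,θ) = λ|ψ_θ⟩⟨ψ_θ| + (1-λ) ρ_top. -/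
def gisinState (lam θ : ℝ) : Matrix (Fin 2 × Fin 2) (Fin 2 × Fin 2) ℂ :=
  (lam : ℂ) • outer (psiTheta θ) + ((1 - lam : ℝ) : ℂ) • rhoTop

/-- The Bell state |Ψ⁺⟩ = (|01⟩ + |10⟩)/√2. -/
def psiPlus : Fin 2 × Fin 2 → ℂ :=
  fun p => if p = (0, 1) then (1 / Real.sqrt 2 : ℝ) else
           if p = (1, 0) then (1 / Real.sqrt 2 : ℝ) else 0

/-- The entanglement witness W = (1/(2√3))(I + ∑ σₙ⊗σₙ). -/
def witnessW : Matrix (Fin 2 × Fin 2) (Fin 2 × Fin 2) ℂ :=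
  ((1 / (2 * Real.sqrt 3) : ℝ) : ℂ) •
    ((1 : Matrix (Fin 2 × Fin 2) (Fin 2 × Fin 2) ℂ) + ∑ i, pauli i ⊗ₖ pauli i)

/-- Conditional entropy S(A|B) of the Werner state. -/
noncomputable def wernerCondEntropy (α : ℝ) : ℝ :=
  vNEntropy (wernerState α) - vNEntropy (ptrA (wernerState α))


/-! ### Auxiliary lemmas for the proof -/

section Aux

lemma aux_basis_vec_ne_zero {n : Type*} [Fintype n] [DecidableEq n] {A : Matrix n n ℂ}
    (hA : A.IsHermitian) (i : n) : ⇑(hA.eigenvectorBasis i) ≠ 0 := by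
  intro h
  apply hA.eigenvectorBasis.orthonormal.ne_zero i
  ext j
  exact congrFun h j

lemma aux_eig_root {n : Type*} [Fintype n] [DecidableEq n] {A : Matrix n n ℂ}
    (hA : A.IsHermitian) (a b : ℝ)
    (hq : (A - ((a:ℝ):ℂ) • 1) * (A - ((b:ℝ):ℂ) • 1) = 0) (i : n) :
    hA.eigenvalues i = a ∨ hA.eigenvalues i = b := by
  set v := ⇑(hA.eigenvectorBasis i) with hv
  set lam := hA.eigenvalues i with hl
  have hmv : A *ᵥ v = (lam:ℂ) • v := by
    rw [hA.mulVec_eigenvectorBasis i]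
    exact RCLike.real_smul_eq_coe_smul (K := ℂ) lam v
  have h1 : ((A - ((b:ℝ):ℂ) • 1) *ᵥ v) = ((lam:ℂ) - b) • v := by
    rw [Matrix.sub_mulVec, hmv, Matrix.smul_mulVec, Matrix.one_mulVec, sub_smul]
  have h2 : ((A - ((a:ℝ):ℂ) • 1) * (A - ((b:ℝ):ℂ) • 1)) *ᵥ v
      = (((lam:ℂ) - a) * ((lam:ℂ) - b)) • v := by
    rw [← Matrix.mulVec_mulVec, h1, Matrix.mulVec_smul, Matrix.sub_mulVec, hmv,
      Matrix.smul_mulVec, Matrix.one_mulVec]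
    module
  rw [hq, Matrix.zero_mulVec] at h2
  have h3 : (((lam:ℂ) - a) * ((lam:ℂ) - b)) = 0 := by
    rcases smul_eq_zero.mp h2.symm with h | h
    · exact h
    · exact absurd h (aux_basis_vec_ne_zero hA i)
  rcases mul_eq_zero.mp h3 with h | h
  · left; exact_mod_cast sub_eq_zero.mp h
  · right; exact_mod_cast sub_eq_zero.mp h

lemma aux_trace_eq_sum_eigs {n : Type*} [Fintype n] [DecidableEq n] {A : Matrix n n ℂ}
    (hA : A.IsHermitian) : A.trace = ∑ i, (hA.eigenvalues i : ℂ) := by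
  conv_lhs => rw [hA.spectral_theorem, Unitary.conjStarAlgAut_apply]
  rw [Matrix.trace_mul_cycle,
    (Matrix.mem_unitaryGroup_iff').mp (hA.eigenvectorUnitary).2, Matrix.one_mul,
    Matrix.trace_diagonal]
  simp

lemma aux_eig_scalar {n : Type*} [Fintype n] [DecidableEq n] (c : ℝ)
    (h : (((c:ℝ):ℂ) • (1 : Matrix n n ℂ)).IsHermitian) (i : n) : h.eigenvalues i = c := by
  rcases aux_eig_root h c c (by rw [sub_self, zero_mul]) i with h' | h' <;> exact h'

lemma aux_scalar_herm {n : Type*} [Fintype n] [DecidableEq n] (c : ℝ) :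
    (((c:ℝ):ℂ) • (1 : Matrix n n ℂ)).IsHermitian := by
  show _ᴴ = _
  rw [Matrix.conjTranspose_smul, Matrix.isHermitian_one]
  simp [Complex.star_def, Complex.conj_ofReal]

lemma aux_vNEntropy_scalar {n : Type*} [Fintype n] [DecidableEq n] (c : ℝ) :
    vNEntropy (((c:ℝ):ℂ) • (1 : Matrix n n ℂ)) =
      (Fintype.card n : ℝ) * (-c * Real.logb 2 c) := by
  rw [vNEntropy, dif_pos (aux_scalar_herm c)]
  simp [aux_eig_scalar c (aux_scalar_herm c), Finset.sum_const, Finset.card_univ, mul_comm]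

lemma aux_psiMinus_norm : ∑ p, psiMinus p * starRingEnd ℂ (psiMinus p) = 1 := by
  simp [psiMinus, Fintype.sum_prod_type, Fin.sum_univ_two, Prod.ext_iff, Complex.conj_ofReal]
  rw [← mul_inv]
  norm_cast
  rw [Real.mul_self_sqrt (by norm_num)]
  norm_num

lemma aux_outer_mul_self {n : Type*} [Fintype n] (v : n → ℂ)
    (h : ∑ k, v k * starRingEnd ℂ (v k) = 1) : outer v * outer v = outer v := by
  ext i j
  simp only [Matrix.mul_apply, outer]
  calc ∑ k, v i * starRingEnd ℂ (v k) * (v k * starRingEnd ℂ (v j))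
      = (v i * starRingEnd ℂ (v j)) * ∑ k, v k * starRingEnd ℂ (v k) := by
        rw [Finset.mul_sum]; congr 1; ext k; ring
    _ = v i * starRingEnd ℂ (v j) := by rw [h, mul_one]

lemma aux_outer_herm {n : Type*} (v : n → ℂ) : (outer v).IsHermitian := by
  ext i j
  simp [outer, Matrix.conjTranspose_apply, mul_comm]

lemma aux_werner_herm (α : ℝ) : (wernerState α).IsHermitian := by
  show _ᴴ = _
  rw [wernerState, Matrix.conjTranspose_add, Matrix.conjTranspose_smul,
    Matrix.conjTranspose_smul, aux_outer_herm psiMinus, Matrix.isHermitian_one]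
  simp [Complex.star_def, Complex.conj_ofReal]

lemma aux_werner_trace (α : ℝ) : (wernerState α).trace = 1 := by
  simp only [wernerState, Matrix.trace_add, Matrix.trace_smul, Matrix.trace_one]
  have h1 : (outer psiMinus).trace = 1 := by
    rw [show (outer psiMinus).trace = ∑ p, psiMinus p * starRingEnd ℂ (psiMinus p) from by
      simp [Matrix.trace, outer, Matrix.diag], aux_psiMinus_norm]
  rw [h1]
  simp [Fintype.card_prod]

lemma aux_werner_quad (α : ℝ) :
    (wernerState α - ((((1 + 3*α)/4 : ℝ)):ℂ) • 1) *
      (wernerState α - ((((1 - α)/4 : ℝ)):ℂ) • 1) = 0 := by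
  have hP := aux_outer_mul_self psiMinus aux_psiMinus_norm
  have e1 : wernerState α - ((((1 + 3*α)/4 : ℝ)):ℂ) • 1
      = (α:ℂ) • (outer psiMinus - 1) := by
    have hc : (((1 - α)/4 : ℝ):ℂ) = (((1 + 3*α)/4 : ℝ):ℂ) - (α:ℂ) := by push_cast; ring
    rw [wernerState, hc, sub_smul, smul_sub]
    abel
  have e2 : wernerState α - ((((1 - α)/4 : ℝ)):ℂ) • 1 = (α:ℂ) • outer psiMinus := by
    simp [wernerState]
  rw [e1, e2, smul_mul_smul_comm, sub_mul, hP, one_mul, sub_self, smul_zero]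

lemma aux_ptrA_werner (α : ℝ) : ptrA (wernerState α) = (((1/2 : ℝ)):ℂ) • 1 := by
  ext i j
  simp only [ptrA, wernerState, Matrix.add_apply, Matrix.smul_apply, Matrix.one_apply, outer,
    psiMinus, smul_eq_mul]
  fin_cases i <;> fin_cases j <;>
    simp [Fin.sum_univ_two, Prod.ext_iff, Complex.conj_ofReal] <;>
    · rw [← mul_inv]
      norm_cast
      rw [Real.mul_self_sqrt (by norm_num)]
      push_cast
      ring

lemma aux_vNEntropy_werner (α : ℝ) (h0 : 0 ≤ α) :
    vNEntropy (wernerState α) =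
      (-( (1+3*α)/4 ) * Real.logb 2 ((1+3*α)/4)) +
        3 * (-( (1-α)/4 ) * Real.logb 2 ((1-α)/4)) := by
  rcases eq_or_lt_of_le h0 with rfl | hα
  · have : wernerState 0 = (((1/4 : ℝ)):ℂ) • 1 := by
      simp [wernerState]
    rw [this, aux_vNEntropy_scalar]
    norm_num [Fintype.card_prod]
    ring
  · have hH := aux_werner_herm α
    set a : ℝ := (1+3*α)/4 with ha
    set b : ℝ := (1-α)/4 with hb
    have hroot : ∀ i, hH.eigenvalues i = a ∨ hH.eigenvalues i = b :=
      fun i => aux_eig_root hH a b (aux_werner_quad α) i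
    have hsum : ∑ i, hH.eigenvalues i = 1 := by
      have h := aux_trace_eq_sum_eigs hH
      rw [aux_werner_trace] at h
      exact_mod_cast h.symm
    have hab : a - b = α := by rw [ha, hb]; ring
    set fa : ℝ := -a * Real.logb 2 a with hfa
    set fb : ℝ := -b * Real.logb 2 b with hfb
    have key : ∀ i, -(hH.eigenvalues i) * Real.logb 2 (hH.eigenvalues i)
        = fb + ((hH.eigenvalues i - b)/α) * (fa - fb) := by
      intro i
      rcases hroot i with h | h <;> rw [h]
      · rw [hab, div_self hα.ne']
        ring
      · simp [hfb]
    have hc : ∑ i, ((hH.eigenvalues i - b)/α) = 1 := by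
      rw [← Finset.sum_div, Finset.sum_sub_distrib, hsum, Finset.sum_const, Finset.card_univ]
      have h4 : (Fintype.card (Fin 2 × Fin 2)) • b = 1 - α := by
        simp [Fintype.card_prod, hb, nsmul_eq_mul]
        ring
      rw [h4]
      field_simp
      ring
    rw [vNEntropy, dif_pos hH]
    calc ∑ i, -(hH.eigenvalues i) * Real.logb 2 (hH.eigenvalues i)
        = ∑ i, (fb + ((hH.eigenvalues i - b)/α) * (fa - fb)) :=
          Finset.sum_congr rfl (fun i _ => key i)
      _ = 4 * fb + (∑ i, ((hH.eigenvalues i - b)/α)) * (fa - fb) := by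
          rw [Finset.sum_add_distrib, Finset.sum_const, Finset.card_univ, ← Finset.sum_mul,
            show (Fintype.card (Fin 2 × Fin 2)) = 4 by simp [Fintype.card_prod], nsmul_eq_mul]
          push_cast
          ring
      _ = fa + 3 * fb := by rw [hc]; ring

/-- Closed form of the Werner conditional entropy. -/
def auxE (α : ℝ) : ℝ :=
  1 - ((1+3*α) * Real.log (1+3*α) + 3*((1-α) * Real.log (1-α))) / (4*Real.log 2)

lemma aux_log4 : Real.log 4 = 2 * Real.log 2 := by
  rw [show (4:ℝ) = 2^2 by norm_num, Real.log_pow]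
  push_cast
  ring

lemma aux_wce_eq (α : ℝ) (h0 : 0 ≤ α) (h1 : α ≤ 1) : wernerCondEntropy α = auxE α := by
  have hl2 : (0:ℝ) < Real.log 2 := Real.log_pos (by norm_num)
  have hlogb_half : Real.logb 2 (1/2 : ℝ) = -1 := by
    rw [one_div, Real.logb_inv, Real.logb_self_eq_one] <;> norm_num
  rw [wernerCondEntropy, aux_vNEntropy_werner α h0, aux_ptrA_werner, aux_vNEntropy_scalar]
  rw [show (Fintype.card (Fin 2) : ℝ) = 2 by simp, hlogb_half]
  have ha : (0:ℝ) < 1 + 3*α := by linarith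
  have hla : Real.logb 2 ((1+3*α)/4) = (Real.log (1+3*α) - 2*Real.log 2) / Real.log 2 := by
    rw [Real.logb, Real.log_div ha.ne' (by norm_num), aux_log4]
  rcases eq_or_lt_of_le h1 with rfl | h1'
  · rw [hla]
    norm_num [auxE, Real.log_zero, Real.logb]
    rw [aux_log4]
    field_simp
    ring
  · have hbpos : (0:ℝ) < 1 - α := by linarith
    have hlb : Real.logb 2 ((1-α)/4) = (Real.log (1-α) - 2*Real.log 2) / Real.log 2 := by
      rw [Real.logb, Real.log_div hbpos.ne' (by norm_num), aux_log4]
    rw [hla, hlb, auxE]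
    field_simp
    ring

lemma aux_E_cont : Continuous auxE := by
  have c1 : Continuous fun α : ℝ => (1+3*α) * Real.log (1+3*α) :=
    Real.continuous_mul_log.comp (by continuity)
  have c2 : Continuous fun α : ℝ => (1-α) * Real.log (1-α) :=
    Real.continuous_mul_log.comp (by continuity)
  exact continuous_const.sub ((c1.add (continuous_const.mul c2)).div_const _)

lemma aux_E_anti : StrictAntiOn auxE (Set.Icc 0 1) := by
  apply strictAntiOn_of_deriv_neg (convex_Icc 0 1) aux_E_cont.continuousOn
  intro x hx
  rw [interior_Icc] at hx
  obtain ⟨hx0, hx1⟩ := hx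
  have hax : (0:ℝ) < 1 + 3*x := by linarith
  have hbx : (0:ℝ) < 1 - x := by linarith
  have h1 : HasDerivAt (fun α : ℝ => 1+3*α) 3 x := by
    simpa using ((hasDerivAt_id x).const_mul (3:ℝ)).const_add (1:ℝ)
  have h2 : HasDerivAt (fun α : ℝ => 1-α) (-1) x := by
    exact (hasDerivAt_id x).const_sub (1:ℝ)
  have g1 : HasDerivAt (fun α : ℝ => (1+3*α) * Real.log (1+3*α))
      ((Real.log (1+3*x) + 1)*3) x :=
    by have := (Real.hasDerivAt_mul_log hax.ne').comp x h1; exact this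
  have g2 : HasDerivAt (fun α : ℝ => (1-α) * Real.log (1-α))
      ((Real.log (1-x) + 1)*(-1)) x :=
    (Real.hasDerivAt_mul_log hbx.ne').comp x h2
  have gE : HasDerivAt auxE
      (0 - ((Real.log (1+3*x) + 1)*3 + 3*((Real.log (1-x) + 1)*(-1))) / (4*Real.log 2)) x :=
    (hasDerivAt_const x (1:ℝ)).sub ((g1.add (g2.const_mul 3)).div_const _)
  rw [gE.deriv]
  have hlog : Real.log (1-x) < Real.log (1+3*x) := Real.log_lt_log hbx (by linarith)
  have hl2 : (0:ℝ) < Real.log 2 := Real.log_pos (by norm_num)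
  have hpos : (0:ℝ) < (Real.log (1+3*x) + 1)*3 + 3*((Real.log (1-x) + 1)*(-1)) := by linarith
  have hd := div_pos hpos (by positivity : (0:ℝ) < 4*Real.log 2)
  linarith

lemma aux_E_one : auxE 1 < 0 := by
  have hl2 : (0:ℝ) < Real.log 2 := Real.log_pos (by norm_num)
  rw [auxE]
  norm_num [Real.log_zero, aux_log4]
  rw [show (4:ℝ) * (2 * Real.log 2) / (4 * Real.log 2) = 2 by field_simp]
  norm_num

lemma aux_E_pos_r : 0 < auxE (18/25) := by
  have hl2 : (0:ℝ) < Real.log 2 := Real.log_pos (by norm_num)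
  have key : (79:ℝ) * Real.log 79 + 21 * Real.log 7 < 100 * Real.log 50 := by
    have h1 : (79:ℝ) * Real.log 79 + 21 * Real.log 7 = Real.log ((79:ℝ)^(79:ℕ) * 7^(21:ℕ)) := by
      rw [Real.log_mul (by positivity) (by positivity), Real.log_pow, Real.log_pow]
      push_cast
      ring
    have h2 : (100:ℝ) * Real.log 50 = Real.log ((50:ℝ)^(100:ℕ)) := by
      rw [Real.log_pow]
      push_cast
      ring
    rw [h1, h2]
    apply Real.log_lt_log (by positivity)
    norm_num
  have e1 : Real.log ((79:ℝ)/25) = Real.log 79 - Real.log 25 :=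
    Real.log_div (by norm_num) (by norm_num)
  have e2 : Real.log ((7:ℝ)/25) = Real.log 7 - Real.log 25 :=
    Real.log_div (by norm_num) (by norm_num)
  have e3 : Real.log (50:ℝ) = Real.log 2 + Real.log 25 := by
    rw [← Real.log_mul (by norm_num) (by norm_num)]
    norm_num
  rw [auxE, show (1:ℝ)+3*(18/25) = 79/25 by norm_num, show (1:ℝ)-18/25 = 7/25 by norm_num,
    e1, e2, sub_pos, div_lt_one (by positivity)]
  nlinarith [key, e3]

lemma aux_sqrt2_lt : 1/Real.sqrt 2 < 18/25 := by
  have hs2 : (0:ℝ) < Real.sqrt 2 := Real.sqrt_pos.mpr (by norm_num)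
  have h : (25/18:ℝ) < Real.sqrt 2 := by
    nlinarith [Real.sq_sqrt (show (0:ℝ) ≤ 2 by norm_num), hs2]
  rw [div_lt_div_iff₀ hs2 (by norm_num)]
  nlinarith

lemma aux_sqrt2_mem : 1/Real.sqrt 2 ∈ Set.Icc (0:ℝ) 1 := by
  have hs2 : (0:ℝ) < Real.sqrt 2 := Real.sqrt_pos.mpr (by norm_num)
  have h1 : (1:ℝ) ≤ Real.sqrt 2 := by
    rw [show (1:ℝ) = Real.sqrt 1 by simp]
    exact Real.sqrt_le_sqrt (by norm_num)
  constructor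
  · positivity
  · rw [div_le_one hs2]
    exact h1

end Aux

/-- S(A|B) of the Werner state is strictly decreasing on [0,1], positive at 1/√2 and
negative at 1; hence it has a unique zero α₀ ∈ (1/√2, 1), satisfying the given
transcendental equation. -/
theorem werner_cond_entropy_zero :
    StrictAntiOn wernerCondEntropy (Set.Icc 0 1) ∧
    0 < wernerCondEntropy (1 / Real.sqrt 2) ∧
    wernerCondEntropy 1 < 0 ∧
    ∃! α₀ : ℝ, α₀ ∈ Set.Ioo (1 / Real.sqrt 2) 1 ∧ wernerCondEntropy α₀ = 0 ∧
      3*(1 - α₀) * Real.logb 2 (1 - α₀) + (1 + 3*α₀) * Real.logb 2 (1 + 3*α₀) = 4 := by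
  have hW : StrictAntiOn wernerCondEntropy (Set.Icc 0 1) := by
    intro x hx y hy hxy
    rw [aux_wce_eq x hx.1 hx.2, aux_wce_eq y hy.1 hy.2]
    exact aux_E_anti hx hy hxy
  have hr_mem : (18/25:ℝ) ∈ Set.Icc (0:ℝ) 1 := by norm_num
  have hEpos : 0 < auxE (1/Real.sqrt 2) :=
    lt_trans aux_E_pos_r (aux_E_anti aux_sqrt2_mem hr_mem aux_sqrt2_lt)
  have hs_lt_one : 1/Real.sqrt 2 < 1 := lt_of_lt_of_le aux_sqrt2_lt (by norm_num)
  refine ⟨hW, ?_, ?_, ?_⟩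
  · rw [aux_wce_eq _ aux_sqrt2_mem.1 aux_sqrt2_mem.2]
    exact hEpos
  · rw [aux_wce_eq 1 (by norm_num) (by norm_num)]
    exact aux_E_one
  · have hivt := intermediate_value_Ioo' hs_lt_one.le aux_E_cont.continuousOn
    have h0mem : (0:ℝ) ∈ Set.Ioo (auxE 1) (auxE (1/Real.sqrt 2)) := ⟨aux_E_one, hEpos⟩
    obtain ⟨α₀, hα₀, hE0⟩ := hivt h0mem
    have hIcc : ∀ β ∈ Set.Ioo (1/Real.sqrt 2) 1, β ∈ Set.Icc (0:ℝ) 1 := fun β hβ =>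
      ⟨le_trans aux_sqrt2_mem.1 hβ.1.le, hβ.2.le⟩
    have hwce0 : wernerCondEntropy α₀ = 0 := by
      rw [aux_wce_eq _ (hIcc _ hα₀).1 (hIcc _ hα₀).2, hE0]
    have hl2 : (0:ℝ) < Real.log 2 := Real.log_pos (by norm_num)
    refine ⟨α₀, ⟨hα₀, hwce0, ?_⟩, ?_⟩
    · have hG : (1+3*α₀) * Real.log (1+3*α₀) + 3*((1-α₀) * Real.log (1-α₀))
          = 4*Real.log 2 := by
        have h := hE0
        rw [auxE] at h
        field_simp at h
        linarith
      rw [Real.logb, Real.logb]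
      field_simp
      linarith [hG]
    · rintro α' ⟨hmem', hz', -⟩
      by_contra hne
      rcases lt_or_gt_of_ne hne with h | h
      · have := hW (hIcc _ hmem') (hIcc _ hα₀) h
        rw [hz', hwce0] at this
        exact lt_irrefl 0 this
      · have := hW (hIcc _ hα₀) (hIcc _ hmem') h
        rw [hz', hwce0] at this
        exact lt_irrefl 0 this

end
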